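/- arXiv:2008.05999 — 4 statements merged into one kernel-verified Lean document; each statement's English description precedes it below -/
import Mathlib

section
/- Let p > 1 be real, let H be a real inner product space, let ξ, η ∈ H, and let a, b ∈ ℝ with b ≠ 0. Then ‖ξ‖^p − p (|a|^{p−2}a/(|b|^{p−2}b)) ‖η‖^{p−2} ⟨η, ξ⟩ + (p−1) (|a|^p/|b|^p) ‖η‖^p ≥ 0. -/
open scoped RealInnerProductSpace

lemma young_aux (p : ℝ) (hp : 1 < p) {X Y : ℝ} (hX : 0 ≤ X) (hY : 0 ≤ Y) :
    p * (X * Y ^ (p - 1)) ≤ X ^ p + (p - 1) * Y ^ p := by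
  have hp1 : (0:ℝ) < p - 1 := by linarith
  have hp0 : (0:ℝ) < p := by linarith
  have hpq : p.HolderConjugate (p / (p - 1)) := Real.HolderConjugate.conjExponent hp
  have h := Real.young_inequality_of_nonneg hX (Real.rpow_nonneg hY (p - 1)) hpq
  have hYp : (Y ^ (p - 1)) ^ (p / (p - 1)) = Y ^ p := by
    rw [← Real.rpow_mul hY]
    congr 1
    field_simp
  rw [hYp] at h
  have := mul_le_mul_of_nonneg_left h hp0.le
  calc p * (X * Y ^ (p - 1)) ≤ p * (X ^ p / p + Y ^ p / (p / (p - 1))) := this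
    _ = X ^ p + (p - 1) * Y ^ p := by field_simp

/-- **Pointwise (algebraic) Picone inequality.**
For a real inner product space `H`, `p > 1`, vectors `ξ η : H` and reals `a b` with `b ≠ 0`,
`‖ξ‖^p − p (|a|^{p−2}a/(|b|^{p−2}b)) ‖η‖^{p−2} ⟨η, ξ⟩ + (p−1)(|a|^p/|b|^p) ‖η‖^p ≥ 0`.
(Real exponents are interpreted via `Real.rpow`.) -/
theorem picone_pointwise_inequality {H : Type*} [NormedAddCommGroup H]
    [InnerProductSpace ℝ H] (p : ℝ) (hp : 1 < p) (ξ η : H) (a b : ℝ) (hb : b ≠ 0) :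
    0 ≤ ‖ξ‖ ^ p
        - p * ((|a| ^ (p - 2) * a) / (|b| ^ (p - 2) * b)) * (‖η‖ ^ (p - 2) * ⟪η, ξ⟫)
        + (p - 1) * (|a| ^ p / |b| ^ p) * ‖η‖ ^ p := by
  have hp0 : (0:ℝ) < p := by linarith
  have hpne : p ≠ 0 := hp0.ne'
  by_cases hη : η = 0
  · simp [hη, Real.zero_rpow hpne]
    positivity
  by_cases ha : a = 0
  · simp [ha, Real.zero_rpow hpne]
    positivity
  have hη' : (0:ℝ) < ‖η‖ := norm_pos_iff.mpr hη
  have ha' : (0:ℝ) < |a| := abs_pos.mpr ha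
  have hb' : (0:ℝ) < |b| := abs_pos.mpr hb
  set c : ℝ := (|a| ^ (p - 2) * a) / (|b| ^ (p - 2) * b) with hc_def
  have hc : |c| = |a| ^ (p - 1) / |b| ^ (p - 1) := by
    rw [hc_def, abs_div, abs_mul, abs_mul,
      abs_of_nonneg (Real.rpow_nonneg (abs_nonneg a) _),
      abs_of_nonneg (Real.rpow_nonneg (abs_nonneg b) _)]
    rw [show p - 1 = (p - 2) + 1 by ring, Real.rpow_add_one ha'.ne',
      Real.rpow_add_one hb'.ne']
  set Y : ℝ := (|a| / |b|) * ‖η‖ with hY_def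
  have hY : 0 ≤ Y := by positivity
  have hnn : ‖η‖ ^ (p - 1) = ‖η‖ ^ (p - 2) * ‖η‖ := by
    rw [show p - 1 = (p - 2) + 1 by ring, Real.rpow_add_one hη'.ne']
  have hYp1 : Y ^ (p - 1) = |a| ^ (p - 1) / |b| ^ (p - 1) * ‖η‖ ^ (p - 1) := by
    rw [hY_def, Real.mul_rpow (by positivity) hη'.le,
      Real.div_rpow (abs_nonneg a) (abs_nonneg b)]
  have hYp : Y ^ p = |a| ^ p / |b| ^ p * ‖η‖ ^ p := by
    rw [hY_def, Real.mul_rpow (by positivity) hη'.le,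
      Real.div_rpow (abs_nonneg a) (abs_nonneg b)]
  -- bound middle term
  have key : p * c * (‖η‖ ^ (p - 2) * ⟪η, ξ⟫) ≤ p * (‖ξ‖ * Y ^ (p - 1)) := by
    have h1 : c * (‖η‖ ^ (p - 2) * ⟪η, ξ⟫) ≤ |c| * (‖η‖ ^ (p - 2) * (‖η‖ * ‖ξ‖)) := by
      calc c * (‖η‖ ^ (p - 2) * ⟪η, ξ⟫) ≤ |c * (‖η‖ ^ (p - 2) * ⟪η, ξ⟫)| := le_abs_self _
        _ = |c| * (‖η‖ ^ (p - 2) * |⟪η, ξ⟫|) := by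
            rw [abs_mul, abs_mul, abs_of_nonneg (Real.rpow_nonneg (norm_nonneg η) _)]
        _ ≤ |c| * (‖η‖ ^ (p - 2) * (‖η‖ * ‖ξ‖)) := by
            gcongr
            · exact abs_real_inner_le_norm η ξ
    have h2 : |c| * (‖η‖ ^ (p - 2) * (‖η‖ * ‖ξ‖)) = ‖ξ‖ * Y ^ (p - 1) := by
      rw [hc, hYp1, hnn]; ring
    rw [mul_assoc]
    exact mul_le_mul_of_nonneg_left (h2 ▸ h1) hp0.le
  have hyoung := young_aux p hp (norm_nonneg ξ) hY
  rw [hYp] at hyoung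
  linarith
end

section
/- Let Ω ⊆ ℝ^n be an open set, let X_1, …, X_N : Ω → ℝ^n be continuous vector fields, and let p > 1. Let u, v : Ω → ℝ be differentiable with v(x) ≠ 0 for all x ∈ Ω. Then L(u,v)(x) = R(u,v)(x) for every x ∈ Ω. -/
open scoped RealInnerProductSpace

/-- Auxiliary: derivative of `|s|^q * s` at `t ≠ 0`. -/
lemma aux_hasDerivAt_abs_rpow_mul {q : ℝ} {t : ℝ} (ht : t ≠ 0) :
    HasDerivAt (fun s : ℝ => |s| ^ q * s) ((q + 1) * |t| ^ q) t := by
  rcases ht.lt_or_gt with ht' | ht'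
  · have h0 : HasDerivAt (fun s : ℝ => -s) (-1) t := (hasDerivAt_id t).neg
    have h1 : HasDerivAt (fun s : ℝ => -((-s) ^ (q + 1)))
        ((q + 1) * (-t) ^ q) t := by
      have := (Real.hasDerivAt_rpow_const (x := -t) (p := q + 1)
        (Or.inl (by linarith))).comp t h0
      refine this.neg.congr_deriv ?_
      ring
    have h2 : (fun s : ℝ => -((-s) ^ (q + 1))) =ᶠ[nhds t] fun s => |s| ^ q * s := by
      filter_upwards [eventually_lt_nhds ht'] with s hs
      rw [abs_of_neg hs, Real.rpow_add_one (by linarith : (-s) ≠ 0)]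
      ring
    have := h1.congr_of_eventuallyEq h2.symm
    simpa [abs_of_neg ht'] using this
  · have h1 : HasDerivAt (fun s : ℝ => s ^ (q + 1)) ((q + 1) * t ^ q) t := by
      simpa using Real.hasDerivAt_rpow_const (p := q + 1) (Or.inl ht'.ne')
    have h2 : (fun s : ℝ => s ^ (q + 1)) =ᶠ[nhds t] fun s => |s| ^ q * s := by
      filter_upwards [eventually_gt_nhds ht'] with s hs
      rw [abs_of_pos hs, Real.rpow_add_one hs.ne']
    have := h1.congr_of_eventuallyEq h2.symm
    simpa [abs_of_pos ht'] using this

/-- Auxiliary: derivative of `|s|^p` everywhere, for `p > 1`. -/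
lemma aux_hasDerivAt_abs_rpow {p : ℝ} (hp : 1 < p) (s : ℝ) :
    HasDerivAt (fun t : ℝ => |t| ^ p) (p * (|s| ^ (p - 2) * s)) s := by
  rcases eq_or_ne s 0 with rfl | hs
  · rw [hasDerivAt_iff_tendsto_slope]
    have hnorm : ∀ t : ℝ, t ∈ ({(0:ℝ)}ᶜ : Set ℝ) →
        ‖slope (fun t : ℝ => |t| ^ p) 0 t‖ ≤ |t| ^ (p - 1) := by
      intro t ht
      have ht : t ≠ 0 := ht
      rw [slope_def_field]
      have : ((fun t : ℝ => |t| ^ p) t - (fun t : ℝ => |t| ^ p) 0) / (t - 0) = |t| ^ p / t := by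
        simp [Real.zero_rpow (by linarith : p ≠ 0)]
      rw [this, Real.norm_eq_abs, abs_div, abs_of_nonneg (Real.rpow_nonneg (abs_nonneg t) p),
        show p = (p - 1) + 1 by ring, Real.rpow_add_one (abs_ne_zero.2 ht)]
      rw [mul_div_assoc]
      have : |t| / |t| = 1 := div_self (abs_ne_zero.2 ht)
      rw [this, mul_one]
      norm_num
    have hlim : Filter.Tendsto (fun t : ℝ => |t| ^ (p - 1)) (nhdsWithin 0 {(0:ℝ)}ᶜ) (nhds 0) := by
      have hc : ContinuousAt (fun t : ℝ => |t| ^ (p - 1)) 0 := by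
        exact (Real.continuousAt_rpow_const _ _ (Or.inr (by linarith))).comp
          continuous_abs.continuousAt
      have := hc.tendsto
      simp only [abs_zero, Real.zero_rpow (by linarith : p - 1 ≠ 0)] at this
      exact this.mono_left nhdsWithin_le_nhds
    have : Filter.Tendsto (slope (fun t : ℝ => |t| ^ p) 0) (nhdsWithin 0 {(0:ℝ)}ᶜ) (nhds 0) := by
      apply squeeze_zero_norm' _ hlim
      filter_upwards [self_mem_nhdsWithin] using hnorm
    simpa using this
  · rcases hs.lt_or_gt with hs' | hs'
    · have h0 : HasDerivAt (fun t : ℝ => -t) (-1) s := (hasDerivAt_id s).neg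
      have h1 : HasDerivAt (fun t : ℝ => (-t) ^ p) (p * ((-s) ^ (p - 1)) * (-1)) s :=
        (Real.hasDerivAt_rpow_const (x := -s) (p := p) (Or.inl (by linarith))).comp s h0
      have h2 : (fun t : ℝ => (-t) ^ p) =ᶠ[nhds s] fun t => |t| ^ p := by
        filter_upwards [eventually_lt_nhds hs'] with t ht
        rw [abs_of_neg ht]
      have h3 := h1.congr_of_eventuallyEq h2.symm
      have : p * (-s) ^ (p - 1) * (-1) = p * (|s| ^ (p - 2) * s) := by
        rw [abs_of_neg hs', show p - 1 = (p - 2) + 1 by ring,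
          Real.rpow_add_one (by linarith : (-s) ≠ 0)]
        ring
      rwa [this] at h3
    · have h1 : HasDerivAt (fun t : ℝ => t ^ p) (p * s ^ (p - 1)) s :=
        Real.hasDerivAt_rpow_const (Or.inl hs'.ne')
      have h2 : (fun t : ℝ => t ^ p) =ᶠ[nhds s] fun t => |t| ^ p := by
        filter_upwards [eventually_gt_nhds hs'] with t ht
        rw [abs_of_pos ht]
      have h3 := h1.congr_of_eventuallyEq h2.symm
      have : p * s ^ (p - 1) = p * (|s| ^ (p - 2) * s) := by
        rw [abs_of_pos hs', show p - 1 = (p - 2) + 1 by ring, Real.rpow_add_one hs'.ne']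
      rwa [this] at h3

/-- Auxiliary: the gradient of `|u|^p / (|v|^{p-2} v)`. -/
lemma aux_gradient_eq {n : ℕ} (p : ℝ) (hp : 1 < p) (u v : EuclideanSpace ℝ (Fin n) → ℝ)
    (x : EuclideanSpace ℝ (Fin n))
    (hu : DifferentiableAt ℝ u x) (hv : DifferentiableAt ℝ v x) (hv0 : v x ≠ 0) :
    gradient (fun y => |u y| ^ p / (|v y| ^ (p - 2) * v y)) x =
      (p * ((|u x| ^ (p - 2) * u x) / (|v x| ^ (p - 2) * v x))) • gradient u x
        + (-((p - 1) * (|u x| ^ p / |v x| ^ p))) • gradient v x := by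
  have hvabs : (0:ℝ) < |v x| := abs_pos.2 hv0
  have hψ0 : |v x| ^ (p - 2) * v x ≠ 0 :=
    mul_ne_zero (ne_of_gt (Real.rpow_pos_of_pos hvabs _)) hv0
  have h1 : HasFDerivAt (fun y => |u y| ^ p)
      ((p * (|u x| ^ (p - 2) * u x)) • fderiv ℝ u x) x :=
    (aux_hasDerivAt_abs_rpow hp (u x)).comp_hasFDerivAt x hu.hasFDerivAt
  have h2 : HasFDerivAt (fun y => |v y| ^ (p - 2) * v y)
      (((p - 1) * |v x| ^ (p - 2)) • fderiv ℝ v x) x := by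
    have := (aux_hasDerivAt_abs_rpow_mul (q := p - 2) hv0).comp_hasFDerivAt x hv.hasFDerivAt
    rw [show p - 1 = p - 2 + 1 by ring]
    exact this
  have h3 : HasFDerivAt (fun y => (|v y| ^ (p - 2) * v y)⁻¹)
      ((-((|v x| ^ (p - 2) * v x) ^ 2)⁻¹) •
        (((p - 1) * |v x| ^ (p - 2)) • fderiv ℝ v x)) x := by
    have hinv := (hasDerivAt_inv hψ0)
    exact hinv.comp_hasFDerivAt x h2
  have h4 := h1.mul h3
  have h5 : HasFDerivAt (fun y => |u y| ^ p / (|v y| ^ (p - 2) * v y))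
      ((p * ((|u x| ^ (p - 2) * u x) / (|v x| ^ (p - 2) * v x))) • fderiv ℝ u x
        + (-((p - 1) * (|u x| ^ p / |v x| ^ p))) • fderiv ℝ v x) x := by
    simp only [div_eq_mul_inv]
    refine h4.congr_fderiv ?_
    symm
    match_scalars
    · field_simp
    · have key : (|v x| ^ (p - 2) * v x) ^ 2 = |v x| ^ p * |v x| ^ (p - 2) := by
        rw [mul_pow, ← sq_abs (v x), ← Real.rpow_natCast (|v x| ^ (p - 2)) 2,
          ← Real.rpow_natCast |v x| 2, ← Real.rpow_mul hvabs.le,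
          ← Real.rpow_add hvabs, ← Real.rpow_add hvabs]
        congr 1
        push_cast
        ring
      rw [key]
      have h1 : |v x| ^ p ≠ 0 := ne_of_gt (Real.rpow_pos_of_pos hvabs _)
      have h2 : |v x| ^ (p - 2) ≠ 0 := ne_of_gt (Real.rpow_pos_of_pos hvabs _)
      field_simp
  have hD := h5.fderiv
  unfold gradient
  rw [hD]
  simp [map_add, map_smul]

/-- The horizontal gradient `∇_X u (x) = (⟨X 1 x, ∇u x⟩, …, ⟨X N x, ∇u x⟩) ∈ ℝ^N`
associated with the family of vector fields `X : Fin N → ℝ^n → ℝ^n`. -/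
noncomputable def gradX {n N : ℕ}
    (X : Fin N → EuclideanSpace ℝ (Fin n) → EuclideanSpace ℝ (Fin n))
    (u : EuclideanSpace ℝ (Fin n) → ℝ) (x : EuclideanSpace ℝ (Fin n)) :
    EuclideanSpace ℝ (Fin N) :=
  (WithLp.equiv 2 (Fin N → ℝ)).symm fun k => ⟪X k x, gradient u x⟫

/-- `L(u,v)(x)` from Picone's identity for general vector fields.
Real exponents are interpreted via `Real.rpow`, so the term containing the factor
`‖∇_X v‖^{p−2}` is `0` where `∇_X v = 0`. -/
noncomputable def piconeL {n N : ℕ} (p : ℝ)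
    (X : Fin N → EuclideanSpace ℝ (Fin n) → EuclideanSpace ℝ (Fin n))
    (u v : EuclideanSpace ℝ (Fin n) → ℝ) (x : EuclideanSpace ℝ (Fin n)) : ℝ :=
  ‖gradX X u x‖ ^ p
    - p * ((|u x| ^ (p - 2) * u x) / (|v x| ^ (p - 2) * v x)) *
        (‖gradX X v x‖ ^ (p - 2) * ⟪gradX X v x, gradX X u x⟫)
    + (p - 1) * (|u x| ^ p / |v x| ^ p) * ‖gradX X v x‖ ^ p

/-- `R(u,v)(x)` from Picone's identity for general vector fields. -/
noncomputable def piconeR {n N : ℕ} (p : ℝ)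
    (X : Fin N → EuclideanSpace ℝ (Fin n) → EuclideanSpace ℝ (Fin n))
    (u v : EuclideanSpace ℝ (Fin n) → ℝ) (x : EuclideanSpace ℝ (Fin n)) : ℝ :=
  ‖gradX X u x‖ ^ p
    - ‖gradX X v x‖ ^ (p - 2) *
        ⟪gradX X v x, gradX X (fun y => |u y| ^ p / (|v y| ^ (p - 2) * v y)) x⟫

/-- **Picone identity for general vector fields:** `L(u,v) = R(u,v)` on `Ω`. -/
theorem picone_identity {n N : ℕ} (p : ℝ) (hp : 1 < p)
    (Ω : Set (EuclideanSpace ℝ (Fin n))) (hΩ : IsOpen Ω)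
    (X : Fin N → EuclideanSpace ℝ (Fin n) → EuclideanSpace ℝ (Fin n))
    (hX : ∀ k, ContinuousOn (X k) Ω)
    (u v : EuclideanSpace ℝ (Fin n) → ℝ)
    (hu : ∀ x ∈ Ω, DifferentiableAt ℝ u x)
    (hv : ∀ x ∈ Ω, DifferentiableAt ℝ v x)
    (hv0 : ∀ x ∈ Ω, v x ≠ 0) :
    ∀ x ∈ Ω, piconeL p X u v x = piconeR p X u v x := by
  intro x hx
  have hgrad := aux_gradient_eq p hp u v x (hu x hx) (hv x hx) (hv0 x hx)
  set A := p * ((|u x| ^ (p - 2) * u x) / (|v x| ^ (p - 2) * v x)) with hA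
  set B := -((p - 1) * (|u x| ^ p / |v x| ^ p)) with hB
  have hgX : gradX X (fun y => |u y| ^ p / (|v y| ^ (p - 2) * v y)) x
      = A • gradX X u x + B • gradX X v x := by
    unfold gradX
    rw [hgrad]
    ext k
    simp [inner_add_right, real_inner_smul_right, Finset.mul_sum, mul_left_comm]
  unfold piconeL piconeR
  rw [hgX, inner_add_right, real_inner_smul_right, real_inner_smul_right,
    real_inner_self_eq_norm_sq]
  have hnv : ‖gradX X v x‖ ^ (p - 2) * ‖gradX X v x‖ ^ (2:ℕ) = ‖gradX X v x‖ ^ p := by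
    rcases eq_or_ne ‖gradX X v x‖ 0 with h | h
    · rw [h]
      simp [Real.zero_rpow (by linarith : p ≠ 0)]
    · rw [← Real.rpow_natCast ‖gradX X v x‖ 2,
        ← Real.rpow_add (lt_of_le_of_ne (norm_nonneg _) (Ne.symm h))]
      norm_num
  rw [hA, hB]
  linear_combination (-(p - 1) * (|u x| ^ p / |v x| ^ p)) * hnv
end

section
/- Let Ω ⊆ ℝ^n be an open set, let X_1, …, X_N : Ω → ℝ^n be continuous vector fields, and let p > 1. Let u, v : Ω → ℝ be differentiable with v(x) ≠ 0 for all x ∈ Ω. Then L(u,v)(x) ≥ 0 for every x ∈ Ω. -/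
open scoped RealInnerProductSpace

/-- Young's inequality in the form `p·x·y^(p-1) ≤ x^p + (p-1)·y^p`. -/
lemma picone_young {p : ℝ} (hp : 1 < p) {x y : ℝ} (hx : 0 ≤ x) (hy : 0 ≤ y) :
    p * (x * y ^ (p - 1)) ≤ x ^ p + (p - 1) * y ^ p := by
  have hpq : p.HolderConjugate (p / (p - 1)) :=
    (Real.holderConjugate_iff_eq_conjExponent hp).2 rfl
  have h := Real.young_inequality_of_nonneg hx (Real.rpow_nonneg hy (p - 1)) hpq
  have hp0 : (0 : ℝ) < p := by linarith
  have h1 : p - 1 ≠ 0 := by intro h'; linarith [sub_eq_zero.mp h']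
  have hy2 : (y ^ (p - 1)) ^ (p / (p - 1)) = y ^ p := by
    rw [← Real.rpow_mul hy]
    congr 1
    field_simp
  rw [hy2] at h
  calc p * (x * y ^ (p - 1)) ≤ p * (x ^ p / p + y ^ p / (p / (p - 1))) :=
        mul_le_mul_of_nonneg_left h hp0.le
    _ = x ^ p + (p - 1) * y ^ p := by field_simp

/-- For nonnegative `r`, `r^(p-2) · r = r^(p-1)` (true also at `r = 0`). -/
lemma picone_rpow_aux {p : ℝ} (hp : 1 < p) {r : ℝ} (hr : 0 ≤ r) :
    r ^ (p - 2) * r = r ^ (p - 1) := by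
  rcases eq_or_lt_of_le hr with h0 | h0
  · simp [← h0, Real.zero_rpow (by intro h'; linarith [sub_eq_zero.mp h'] : p - 1 ≠ 0)]
  · rw [← Real.rpow_add_one h0.ne']
    congr 1
    ring

/-- **Picone inequality for general vector fields:** `L(u,v) ≥ 0` on `Ω`. -/
theorem picone_nonneg {n N : ℕ} (p : ℝ) (hp : 1 < p)
    (Ω : Set (EuclideanSpace ℝ (Fin n))) (hΩ : IsOpen Ω)
    (X : Fin N → EuclideanSpace ℝ (Fin n) → EuclideanSpace ℝ (Fin n))
    (hX : ∀ k, ContinuousOn (X k) Ω)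
    (u v : EuclideanSpace ℝ (Fin n) → ℝ)
    (hu : ∀ x ∈ Ω, DifferentiableAt ℝ u x)
    (hv : ∀ x ∈ Ω, DifferentiableAt ℝ v x)
    (hv0 : ∀ x ∈ Ω, v x ≠ 0) :
    ∀ x ∈ Ω, 0 ≤ piconeL p X u v x := by
  intro x hx
  unfold piconeL
  set a := ‖gradX X u x‖ with ha
  set b := ‖gradX X v x‖ with hb
  set s : ℝ := ⟪gradX X v x, gradX X u x⟫ with hs
  set c := (|u x| ^ (p - 2) * u x) / (|v x| ^ (p - 2) * v x) with hc
  have ha0 : 0 ≤ a := norm_nonneg _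
  have hb0 : 0 ≤ b := norm_nonneg _
  have hcs : |s| ≤ b * a := abs_real_inner_le_norm _ _
  set t := |u x| / |v x| with ht
  have ht0 : 0 ≤ t := div_nonneg (abs_nonneg _) (abs_nonneg _)
  -- |c| = t ^ (p - 1)
  have hcabs : |c| = t ^ (p - 1) := by
    rw [hc, abs_div, abs_mul, abs_mul,
      abs_of_nonneg (Real.rpow_nonneg (abs_nonneg (u x)) _),
      abs_of_nonneg (Real.rpow_nonneg (abs_nonneg (v x)) _),
      picone_rpow_aux hp (abs_nonneg _), picone_rpow_aux hp (abs_nonneg _),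
      ← Real.div_rpow (abs_nonneg _) (abs_nonneg _)]
  -- bound the middle term
  have hmid : c * (b ^ (p - 2) * s) ≤ t ^ (p - 1) * (b ^ (p - 1) * a) := by
    calc c * (b ^ (p - 2) * s) ≤ |c * (b ^ (p - 2) * s)| := le_abs_self _
      _ = |c| * (b ^ (p - 2) * |s|) := by
          rw [abs_mul, abs_mul, abs_of_nonneg (Real.rpow_nonneg hb0 _)]
      _ ≤ t ^ (p - 1) * (b ^ (p - 2) * (b * a)) := by
          rw [hcabs]
          exact mul_le_mul_of_nonneg_left
            (mul_le_mul_of_nonneg_left hcs (Real.rpow_nonneg hb0 _))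
            (Real.rpow_nonneg ht0 _)
      _ = t ^ (p - 1) * (b ^ (p - 1) * a) := by
          rw [← mul_assoc (b ^ (p - 2)) b a, picone_rpow_aux hp hb0]
  -- apply Young's inequality
  have hmain : p * (c * (b ^ (p - 2) * s)) ≤ a ^ p + (p - 1) * (t ^ p * b ^ p) := by
    calc p * (c * (b ^ (p - 2) * s)) ≤ p * (t ^ (p - 1) * (b ^ (p - 1) * a)) :=
          mul_le_mul_of_nonneg_left hmid (by linarith)
      _ = p * (a * (t * b) ^ (p - 1)) := by rw [Real.mul_rpow ht0 hb0]; ring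
      _ ≤ a ^ p + (p - 1) * (t * b) ^ p := picone_young hp ha0 (mul_nonneg ht0 hb0)
      _ = a ^ p + (p - 1) * (t ^ p * b ^ p) := by rw [Real.mul_rpow ht0 hb0]
  have hdiv : |u x| ^ p / |v x| ^ p = t ^ p :=
    (Real.div_rpow (abs_nonneg _) (abs_nonneg _) p).symm
  rw [hdiv]
  nlinarith [hmain]
end

section
/- Let Ω ⊆ ℝ^n be a connected open set, let p > 1, and let X_1, …, X_N : Ω → ℝ^n be continuous vector fields such that for every x ∈ Ω the vectors X_1(x), …, X_N(x) span ℝ^n. Let u, v ∈ C^1(Ω) with v(x) > 0 and u(x) ≥ 0 for all x ∈ Ω. Then L(u,v)(x) = 0 for every x ∈ Ω if and only if there exists a constant c ≥ 0 such that u = c v on Ω; moreover, if u is not identically zero then c > 0. -/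
open scoped RealInnerProductSpace

section aux

-- Young's inequality variants
lemma young_le {p A B : ℝ} (hp : 1 < p) (hA : 0 ≤ A) (hB : 0 ≤ B) :
    p * B ^ (p - 1) * A ≤ A ^ p + (p - 1) * B ^ p := by
  rcases eq_or_lt_of_le hB with hB0 | hB0
  · rw [← hB0, Real.zero_rpow (by linarith), Real.zero_rpow (by linarith)]
    nlinarith [Real.rpow_nonneg hA p]
  · have hber := one_add_mul_self_le_rpow_one_add
      (show (-1:ℝ) ≤ A / B - 1 by have := div_nonneg hA hB0.le; linarith) hp.le
    simp only [add_sub_cancel] at hber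
    have h1 : (A / B) ^ p = A ^ p / B ^ p := Real.div_rpow hA hB0.le p
    have h2 : B ^ p = B ^ (p - 1) * B := by
      rw [← Real.rpow_add_one hB0.ne']; ring_nf
    have hBp : 0 < B ^ p := Real.rpow_pos_of_pos hB0 p
    rw [h1] at hber
    have := mul_le_mul_of_nonneg_right hber hBp.le
    rw [div_mul_cancel₀ _ hBp.ne'] at this
    have h3 : (A / B) * B = A := div_mul_cancel₀ _ hB0.ne'
    have h4 : A / B * B ^ p = A * B ^ (p - 1) := by
      rw [h2, show A / B * (B ^ (p - 1) * B) = A / B * B * B ^ (p - 1) from by ring, h3]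
    nlinarith [this, h4]

lemma young_eq {p A B : ℝ} (hp : 1 < p) (hA : 0 ≤ A) (hB : 0 ≤ B)
    (h : A ^ p + (p - 1) * B ^ p - p * B ^ (p - 1) * A = 0) : A = B := by
  by_contra hne
  rcases eq_or_lt_of_le hB with hB0 | hB0
  · rw [← hB0, Real.zero_rpow (by linarith), Real.zero_rpow (by linarith)] at h
    have hA0 : A ≠ 0 := by rw [← hB0] at hne; exact hne
    have : 0 < A ^ p := Real.rpow_pos_of_pos (lt_of_le_of_ne hA (Ne.symm hA0)) p
    nlinarith
  · have hber := one_add_mul_self_lt_rpow_one_add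
      (show (-1:ℝ) ≤ A / B - 1 by have := div_nonneg hA hB0.le; linarith)
      (by
        intro hc
        apply hne
        have : A / B = 1 := by linarith
        field_simp at this; linarith) hp
    simp only [add_sub_cancel] at hber
    have h1 : (A / B) ^ p = A ^ p / B ^ p := Real.div_rpow hA hB0.le p
    have h2 : B ^ p = B ^ (p - 1) * B := by
      rw [← Real.rpow_add_one hB0.ne']; ring_nf
    have hBp : 0 < B ^ p := Real.rpow_pos_of_pos hB0 p
    rw [h1] at hber
    have := mul_lt_mul_of_pos_right hber hBp
    rw [div_mul_cancel₀ _ hBp.ne'] at this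
    have h3 : (A / B) * B = A := div_mul_cancel₀ _ hB0.ne'
    have h4 : A / B * B ^ p = A * B ^ (p - 1) := by
      rw [h2, show A / B * (B ^ (p - 1) * B) = A / B * B * B ^ (p - 1) from by ring, h3]
    nlinarith [this, h4]

lemma const_of_hasFDerivAt_zero {E F : Type*} [NormedAddCommGroup E] [NormedSpace ℝ E]
    [NormedAddCommGroup F] [NormedSpace ℝ F]
    {s : Set E} (hs : IsOpen s) (hsc : IsPreconnected s) {g : E → F}
    (hg : ∀ x ∈ s, HasFDerivAt g (0 : E →L[ℝ] F) x)
    {x y : E} (hx : x ∈ s) (hy : y ∈ s) : g x = g y := by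
  have key : ∀ z ∈ s, ∃ ε > 0, Metric.ball z ε ⊆ s ∧ ∀ w ∈ Metric.ball z ε, g w = g z := by
    intro z hz
    obtain ⟨ε, hε, hball⟩ := Metric.isOpen_iff.1 hs z hz
    refine ⟨ε, hε, hball, fun w hw => ?_⟩
    refine (convex_ball z ε).is_const_of_fderivWithin_eq_zero
      (fun a ha => ((hg a (hball ha)).differentiableAt).differentiableWithinAt)
      (fun a ha => ?_) hw (Metric.mem_ball_self hε)
    rw [fderivWithin_of_isOpen Metric.isOpen_ball ha]
    exact (hg a (hball ha)).fderiv
  set t := {z | z ∈ s ∧ g z = g x} with ht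
  have ht_open : IsOpen t := by
    rw [Metric.isOpen_iff]
    intro z hz
    obtain ⟨ε, hε, hball, hconst⟩ := key z hz.1
    exact ⟨ε, hε, fun w hw => ⟨hball hw, (hconst w hw).trans hz.2⟩⟩
  have hsub : s ⊆ t := by
    apply hsc.subset_of_closure_inter_subset ht_open ⟨x, hx, hx, rfl⟩
    rintro z ⟨hz1, hz2⟩
    obtain ⟨ε, hε, hball, hconst⟩ := key z hz2
    obtain ⟨w, hw1, hw2⟩ := Metric.mem_closure_iff.1 hz1 ε hε
    have hwball : w ∈ Metric.ball z ε := by rwa [Metric.mem_ball, dist_comm]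
    exact ⟨hz2, (hconst w hwball).symm.trans hw1.2⟩
  exact (hsub hy).2.symm

variable {F : Type*} [NormedAddCommGroup F] [InnerProductSpace ℝ F]


lemma hKb {p : ℝ} (hp : 1 < p) (b : F) {s : ℝ} (hs : 0 ≤ s) :
    s ^ (p - 1) * ‖b‖ ^ (p - 2) * ‖b‖ = (s * ‖b‖) ^ (p - 1) := by
  by_cases hb : b = 0
  · simp [hb, Real.zero_rpow (ne_of_gt (show (0:ℝ) < p - 1 by linarith))]
  · have hb' : (0:ℝ) < ‖b‖ := norm_pos_iff.2 hb
    rw [Real.mul_rpow hs (norm_nonneg b), mul_assoc, ← Real.rpow_add_one hb'.ne']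
    congr 1
    ring

lemma hsb {p : ℝ} (b : F) {s : ℝ} (hs : 0 ≤ s) :
    s ^ p * ‖b‖ ^ p = (s * ‖b‖) ^ p :=
  (Real.mul_rpow hs (norm_nonneg b)).symm

lemma picone_point_split {p : ℝ} (hp : 1 < p) (a b : F) {s : ℝ} (hs : 0 ≤ s) :
    ‖a‖ ^ p - p * s ^ (p - 1) * (‖b‖ ^ (p - 2) * ⟪b, a⟫) + (p - 1) * s ^ p * ‖b‖ ^ p
      = (‖a‖ ^ p + (p - 1) * (s * ‖b‖) ^ p - p * (s * ‖b‖) ^ (p - 1) * ‖a‖)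
        + p * (s ^ (p - 1) * ‖b‖ ^ (p - 2)) * (‖b‖ * ‖a‖ - ⟪b, a⟫) := by
  rw [← hsb b hs, ← hKb hp b hs]
  ring

lemma picone_point_nonneg {p : ℝ} (hp : 1 < p) (a b : F) {s : ℝ} (hs : 0 ≤ s) :
    0 ≤ ‖a‖ ^ p - p * s ^ (p - 1) * (‖b‖ ^ (p - 2) * ⟪b, a⟫) + (p - 1) * s ^ p * ‖b‖ ^ p := by
  rw [picone_point_split hp a b hs]
  have hY := young_le hp (norm_nonneg a) (mul_nonneg hs (norm_nonneg b))
  have hK : 0 ≤ s ^ (p - 1) * ‖b‖ ^ (p - 2) :=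
    mul_nonneg (Real.rpow_nonneg hs _) (Real.rpow_nonneg (norm_nonneg b) _)
  have hCS : ⟪b, a⟫ ≤ ‖b‖ * ‖a‖ := real_inner_le_norm b a
  have h2 : 0 ≤ p * (s ^ (p - 1) * ‖b‖ ^ (p - 2)) * (‖b‖ * ‖a‖ - ⟪b, a⟫) :=
    mul_nonneg (mul_nonneg (by linarith) hK) (by linarith)
  linarith

lemma picone_point_eq {p : ℝ} (hp : 1 < p) (a b : F) {s : ℝ} (hs : 0 ≤ s)
    (hE : ‖a‖ ^ p - p * s ^ (p - 1) * (‖b‖ ^ (p - 2) * ⟪b, a⟫)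
        + (p - 1) * s ^ p * ‖b‖ ^ p = 0) :
    a = s • b := by
  rw [picone_point_split hp a b hs] at hE
  have hY := young_le hp (norm_nonneg a) (mul_nonneg hs (norm_nonneg b))
  have hK : 0 ≤ s ^ (p - 1) * ‖b‖ ^ (p - 2) :=
    mul_nonneg (Real.rpow_nonneg hs _) (Real.rpow_nonneg (norm_nonneg b) _)
  have hCS : ⟪b, a⟫ ≤ ‖b‖ * ‖a‖ := real_inner_le_norm b a
  have h2 : 0 ≤ p * (s ^ (p - 1) * ‖b‖ ^ (p - 2)) * (‖b‖ * ‖a‖ - ⟪b, a⟫) :=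
    mul_nonneg (mul_nonneg (by linarith) hK) (by linarith)
  have hP1 : ‖a‖ ^ p + (p - 1) * (s * ‖b‖) ^ p - p * (s * ‖b‖) ^ (p - 1) * ‖a‖ = 0 := by
    linarith
  have hAB : ‖a‖ = s * ‖b‖ :=
    young_eq hp (norm_nonneg a) (mul_nonneg hs (norm_nonneg b)) hP1
  by_cases hb : b = 0
  · have : ‖a‖ = 0 := by rw [hAB, hb, norm_zero, mul_zero]
    rw [norm_eq_zero] at this
    rw [this, hb, smul_zero]
  rcases eq_or_lt_of_le hs with hs0 | hs0
  · have : ‖a‖ = 0 := by rw [hAB, ← hs0, zero_mul]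
    rw [norm_eq_zero] at this
    rw [this, ← hs0, zero_smul]
  · have hb' : (0:ℝ) < ‖b‖ := norm_pos_iff.2 hb
    have hKpos : 0 < p * (s ^ (p - 1) * ‖b‖ ^ (p - 2)) :=
      mul_pos (by linarith)
        (mul_pos (Real.rpow_pos_of_pos hs0 _) (Real.rpow_pos_of_pos hb' _))
    have hP2 : p * (s ^ (p - 1) * ‖b‖ ^ (p - 2)) * (‖b‖ * ‖a‖ - ⟪b, a⟫) = 0 := by
      linarith
    have hinner : ⟪b, a⟫ = ‖b‖ * ‖a‖ := by
      rcases mul_eq_zero.1 hP2 with h | h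
      · exact absurd h hKpos.ne'
      · linarith
    have hsmul : ‖a‖ • b = ‖b‖ • a := inner_eq_norm_mul_iff_real.1 hinner
    have : ‖b‖ • a = ‖b‖ • (s • b) := by
      rw [← hsmul, hAB, smul_smul, mul_comm]
    exact smul_right_injective F hb'.ne' this

lemma picone_point_zero {p : ℝ} (hp : 1 < p) (a b : F) {s : ℝ} (hs : 0 ≤ s)
    (hab : a = s • b) :
    ‖a‖ ^ p - p * s ^ (p - 1) * (‖b‖ ^ (p - 2) * ⟪b, a⟫)
      + (p - 1) * s ^ p * ‖b‖ ^ p = 0 := by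
  subst hab
  have hna : ‖s • b‖ = s * ‖b‖ := by
    rw [norm_smul, Real.norm_eq_abs, abs_of_nonneg hs]
  rcases eq_or_lt_of_le hs with hs0 | hs0
  · rw [← hs0]
    simp [Real.zero_rpow (show p ≠ 0 by linarith)]
  by_cases hb : b = 0
  · rw [hb]
    simp [Real.zero_rpow (show p ≠ 0 by linarith)]
  · have hb' : (0:ℝ) < ‖b‖ := norm_pos_iff.2 hb
    have e1 : s ^ p = s ^ (p - 1) * s := by
      rw [← Real.rpow_add_one hs0.ne']; congr 1; ring
    have e2 : ‖b‖ ^ p = ‖b‖ ^ (p - 2) * (‖b‖ * ‖b‖) := by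
      rw [show p = p - 2 + 2 by ring, Real.rpow_add hb', Real.rpow_two]
      ring_nf
    have hiv : ⟪b, s • b⟫ = s * (‖b‖ * ‖b‖) := by
      rw [real_inner_smul_right, real_inner_self_eq_norm_mul_norm]
    rw [hna, ← hsb b hs, hiv, e1, e2]
    ring
end aux


lemma abs_rpow_mul {p t : ℝ} (hp : 1 < p) (ht : 0 ≤ t) :
    |t| ^ (p - 2) * t = t ^ (p - 1) := by
  rcases eq_or_lt_of_le ht with h0 | h0
  · rw [← h0]
    simp [Real.zero_rpow (ne_of_gt (show (0:ℝ) < p - 1 by linarith))]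
  · rw [abs_of_pos h0, ← Real.rpow_add_one h0.ne']
    congr 1
    ring

lemma gradX_apply {n N : ℕ}
    (X : Fin N → EuclideanSpace ℝ (Fin n) → EuclideanSpace ℝ (Fin n))
    (u : EuclideanSpace ℝ (Fin n) → ℝ) (x : EuclideanSpace ℝ (Fin n)) (k : Fin N) :
    gradX X u x k = fderiv ℝ u x (X k x) := by
  unfold gradX gradient
  rw [WithLp.equiv_symm_apply, PiLp.toLp_apply, real_inner_comm]
  exact InnerProductSpace.toDual_symm_apply

/-- **Equality case in the Picone identity for general vector fields:**
on a connected open set `Ω` on which the vector fields span `ℝ^n` at every point,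
for `C¹` functions `u ≥ 0` and `v > 0`, one has `L(u,v) ≡ 0` on `Ω` iff `u = c v`
on `Ω` for some constant `c ≥ 0`; moreover `c > 0` if `u` is not identically zero. -/
theorem picone_equality_case {n N : ℕ} (p : ℝ) (hp : 1 < p)
    (Ω : Set (EuclideanSpace ℝ (Fin n))) (hΩ : IsOpen Ω) (hconn : IsConnected Ω)
    (X : Fin N → EuclideanSpace ℝ (Fin n) → EuclideanSpace ℝ (Fin n))
    (hX : ∀ k, ContinuousOn (X k) Ω)
    (hspan : ∀ x ∈ Ω, Submodule.span ℝ (Set.range fun k => X k x) = ⊤)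
    (u v : EuclideanSpace ℝ (Fin n) → ℝ)
    (hu : ContDiffOn ℝ 1 u Ω) (hv : ContDiffOn ℝ 1 v Ω)
    (hvpos : ∀ x ∈ Ω, 0 < v x) (hunn : ∀ x ∈ Ω, 0 ≤ u x) :
    (∀ x ∈ Ω, piconeL p X u v x = 0) ↔
      ∃ c : ℝ, 0 ≤ c ∧ (∀ x ∈ Ω, u x = c * v x) ∧
        ((∃ x ∈ Ω, u x ≠ 0) → 0 < c) := by
  have hdu : ∀ x ∈ Ω, DifferentiableAt ℝ u x := fun x hx =>
    (hu.differentiableOn one_ne_zero).differentiableAt (hΩ.mem_nhds hx)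
  have hdv : ∀ x ∈ Ω, DifferentiableAt ℝ v x := fun x hx =>
    (hv.differentiableOn one_ne_zero).differentiableAt (hΩ.mem_nhds hx)
  have hrepr : ∀ x ∈ Ω, piconeL p X u v x =
      ‖gradX X u x‖ ^ p
        - p * (u x / v x) ^ (p - 1) *
            (‖gradX X v x‖ ^ (p - 2) * ⟪gradX X v x, gradX X u x⟫)
        + (p - 1) * (u x / v x) ^ p * ‖gradX X v x‖ ^ p := by
    intro x hx
    have hv' := hvpos x hx
    have hu' := hunn x hx
    have c1 : (|u x| ^ (p - 2) * u x) / (|v x| ^ (p - 2) * v x) = (u x / v x) ^ (p - 1) := by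
      rw [abs_rpow_mul hp hu', abs_rpow_mul hp hv'.le, ← Real.div_rpow hu' hv'.le]
    have c2 : |u x| ^ p / |v x| ^ p = (u x / v x) ^ p := by
      rw [abs_of_nonneg hu', abs_of_pos hv', ← Real.div_rpow hu' hv'.le]
    unfold piconeL
    rw [c1, c2]
  constructor
  · intro h
    have hpt : ∀ x ∈ Ω, gradX X u x = (u x / v x) • gradX X v x := by
      intro x hx
      refine picone_point_eq hp _ _ (div_nonneg (hunn x hx) (hvpos x hx).le) ?_
      rw [← hrepr x hx]
      exact h x hx
    have hrel : ∀ x ∈ Ω, ∀ y, v x * fderiv ℝ u x y = u x * fderiv ℝ v x y := by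
      intro x hx
      have hvx : v x ≠ 0 := (hvpos x hx).ne'
      have hcomp : ∀ k, fderiv ℝ u x (X k x) = (u x / v x) * fderiv ℝ v x (X k x) := by
        intro k
        have h1 := congrArg (fun w : EuclideanSpace ℝ (Fin N) => w k) (hpt x hx)
        simpa [gradX_apply, PiLp.smul_apply, smul_eq_mul] using h1
      set L : EuclideanSpace ℝ (Fin n) →L[ℝ] ℝ :=
        v x • fderiv ℝ u x - u x • fderiv ℝ v x with hL
      have hker : ∀ k, L (X k x) = 0 := by
        intro k
        simp only [hL, ContinuousLinearMap.sub_apply, ContinuousLinearMap.smul_apply,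
          smul_eq_mul, hcomp k]
        field_simp
        ring
      have hsp : Submodule.span ℝ (Set.range fun k => X k x) ≤
          LinearMap.ker (L : EuclideanSpace ℝ (Fin n) →ₗ[ℝ] ℝ) := by
        rw [Submodule.span_le]
        rintro _ ⟨k, rfl⟩
        exact LinearMap.mem_ker.2 (hker k)
      rw [hspan x hx] at hsp
      intro y
      have hy : L y = 0 := hsp (Submodule.mem_top (x := y))
      simpa [hL, ContinuousLinearMap.sub_apply, ContinuousLinearMap.smul_apply,
        smul_eq_mul, sub_eq_zero] using hy
    have hquot : ∀ x ∈ Ω,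
        HasFDerivAt (fun y => u y * (v y)⁻¹) (0 : EuclideanSpace ℝ (Fin n) →L[ℝ] ℝ) x := by
      intro x hx
      have hvx : v x ≠ 0 := (hvpos x hx).ne'
      have h1 : HasFDerivAt (fun y => (v y)⁻¹)
          ((-ContinuousLinearMap.mulLeftRight ℝ ℝ (v x)⁻¹ (v x)⁻¹).comp (fderiv ℝ v x)) x :=
        (hasFDerivAt_inv' hvx).comp x (hdv x hx).hasFDerivAt
      have h2 := (hdu x hx).hasFDerivAt.mul h1
      have h0 : (u x • (-ContinuousLinearMap.mulLeftRight ℝ ℝ (v x)⁻¹ (v x)⁻¹).comp (fderiv ℝ v x)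
          + (v x)⁻¹ • fderiv ℝ u x) = (0 : EuclideanSpace ℝ (Fin n) →L[ℝ] ℝ) := by
        ext y
        have hxy := hrel x hx y
        simp only [ContinuousLinearMap.add_apply, ContinuousLinearMap.smul_apply,
          ContinuousLinearMap.comp_apply, ContinuousLinearMap.neg_apply,
          ContinuousLinearMap.mulLeftRight_apply, smul_eq_mul, ContinuousLinearMap.zero_apply]
        field_simp
        linear_combination hxy
      rw [← h0]
      exact h2
    obtain ⟨x₀, hx₀⟩ := hconn.nonempty
    set c := u x₀ * (v x₀)⁻¹ with hc
    have huc : ∀ x ∈ Ω, u x = c * v x := by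
      intro x hx
      have hvx : v x ≠ 0 := (hvpos x hx).ne'
      have hgc : u x * (v x)⁻¹ = c :=
        const_of_hasFDerivAt_zero hΩ hconn.isPreconnected hquot hx hx₀
      field_simp at hgc
      linarith [hgc]
    refine ⟨c, mul_nonneg (hunn x₀ hx₀) (inv_nonneg.2 (hvpos x₀ hx₀).le), huc, ?_⟩
    rintro ⟨x, hx, hux⟩
    rcases lt_or_eq_of_le (mul_nonneg (hunn x₀ hx₀) (inv_nonneg.2 (hvpos x₀ hx₀).le)) with
      hlt | heq
    · exact hlt
    · exfalso
      apply hux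
      rw [huc x hx, hc, ← heq, zero_mul]
  · rintro ⟨c, hc0, hcv, -⟩ x hx
    have hvx : v x ≠ 0 := (hvpos x hx).ne'
    have hgx : gradX X u x = c • gradX X v x := by
      have hev : u =ᶠ[nhds x] fun y => c * v y :=
        Filter.eventuallyEq_of_mem (hΩ.mem_nhds hx) (fun y hy => hcv y hy)
      have hfd : fderiv ℝ u x = c • fderiv ℝ v x := by
        rw [hev.fderiv_eq, fderiv_const_mul (hdv x hx)]
      ext k
      simp [gradX_apply, hfd, PiLp.smul_apply, smul_eq_mul,
        ContinuousLinearMap.smul_apply]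
    have hsx : u x / v x = c := by
      rw [hcv x hx]
      field_simp
    rw [hrepr x hx]
    exact picone_point_zero hp _ _ (div_nonneg (hunn x hx) (hvpos x hx).le)
      (by rw [hsx, hgx])
end
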